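/- Let Γ act transitively on a set Ω, let S be a finite generating set of Γ, and let ω₀ ∈ Ω. If there is a local embedding π of the word-metric ball B_S(n) ⊆ Γ into a finite group Q together with an injection θ : B_{S,ω₀}(n) → X into a finite Q-set X satisfying θ(ωg) = θ(ω)π(g) whenever ω, ωg ∈ B_{S,ω₀}(n) and g ∈ B_S(n), then |Sym(B_{S,ω₀}(n))| · |Q| ≥ |B_{S,ω₀}(n)|! and in particular any finite group admitting a local embedding of the radius-n ball of S(Γ,Ω) = FSym(Ω) ⋊ Γ with respect to the generating set S ∪ {(ω₀ ω₀s) : s ∈ S} has order at least |B_{S,ω₀}(n/16)|! for n ≥ 80. -/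

import Mathlib

/-- The ball of radius `n` in the word metric with respect to a set `S`. -/
def wordBall {G : Type*} [Group G] (S : Set G) (n : ℕ) : Set G :=
  {x | ∃ l : List G, l.length ≤ n ∧ (∀ y ∈ l, y ∈ S ∪ S⁻¹) ∧ l.prod = x}

/-- A local embedding of the subset `F` into `Q`: an injective partial homomorphism. -/
def IsLocalEmbedding {G Q : Type*} [Group G] [Group Q] (F : Set G) (π : G → Q) : Prop :=
  Set.InjOn π F ∧ ∀ g h : G, g ∈ F → h ∈ F → g * h ∈ F → π (g * h) = π g * π h

/-- The ball of radius `n` about `ω₀` in the Schreier graph of `Γ ↷ Ω`. -/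
def schreierBall {Γ Ω : Type*} [Group Γ] [MulAction Γ Ω] (S : Set Γ) (ω₀ : Ω) (n : ℕ) :
    Set Ω :=
  (fun g : Γ => g • ω₀) '' wordBall S n

/-- The group of finitely supported permutations of `Ω`. -/
def FSym (Ω : Type*) : Subgroup (Equiv.Perm Ω) where
  carrier := {σ | {x | σ x ≠ x}.Finite}
  one_mem' := by
    have h : {x : Ω | (1 : Equiv.Perm Ω) x ≠ x} = ∅ := by ext x; simp
    show ({x : Ω | (1 : Equiv.Perm Ω) x ≠ x}).Finite
    rw [h]; exact Set.finite_empty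
  mul_mem' := by
    intro σ τ hσ hτ
    apply (Set.Finite.union hσ hτ).subset
    intro x hx
    by_cases h : τ x = x
    · left
      simpa [Equiv.Perm.mul_apply, h] using hx
    · right; exact h
  inv_mem' := by
    intro σ hσ
    apply hσ.subset
    intro x hx
    simp only [Set.mem_setOf_eq] at hx ⊢
    intro h
    exact hx (σ.injective (by simp [h]))

instance FSym.normal (Ω : Type*) : (FSym Ω).Normal := by
  constructor
  intro σ hσ τ
  show {x | (τ * σ * τ⁻¹ : Equiv.Perm Ω) x ≠ x}.Finite
  apply (Set.Finite.image τ hσ).subset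
  intro x hx
  simp only [Set.mem_setOf_eq, Equiv.Perm.mul_apply] at hx
  refine ⟨τ⁻¹ x, ?_, by simp⟩
  intro h
  exact hx (by rw [h]; simp)

/-- The action of `Γ` on `FSym Ω` induced by an action of `Γ` on `Ω`. -/
def fsymConj (Γ Ω : Type*) [Group Γ] [MulAction Γ Ω] : Γ →* MulAut (FSym Ω) :=
  MulAut.conjNormal.comp (MulAction.toPermHom Γ Ω)

/-- The transposition `(a b)` as an element of `FSym Ω`. -/
def swapF {Ω : Type*} [DecidableEq Ω] (a b : Ω) : FSym Ω :=
  ⟨Equiv.swap a b, by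
    apply (Set.Finite.insert a (Set.finite_singleton b)).subset
    intro x hx
    rcases (Equiv.swap_apply_ne_self_iff.mp hx).2 with h | h <;> simp [h]⟩

namespace SymEnrichAux

variable {G : Type*} [Group G] {T : Set G}

theorem one_mem_wordBall (T : Set G) (n : ℕ) : (1 : G) ∈ wordBall T n :=
  ⟨[], by simp, by simp, rfl⟩

theorem wordBall_mono {a b : ℕ} (h : a ≤ b) : wordBall T a ⊆ wordBall T b := by
  rintro x ⟨l, hl, hm, rfl⟩
  exact ⟨l, hl.trans h, hm, rfl⟩

theorem mul_mem_wordBall {x y : G} {a b : ℕ} (hx : x ∈ wordBall T a) (hy : y ∈ wordBall T b) :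
    x * y ∈ wordBall T (a + b) := by
  obtain ⟨l, hl, hm, rfl⟩ := hx
  obtain ⟨l', hl', hm', rfl⟩ := hy
  exact ⟨l ++ l', by simpa using Nat.add_le_add hl hl',
    by intro z hz; rcases List.mem_append.1 hz with h | h; exacts [hm z h, hm' z h],
    List.prod_append⟩

theorem inv_mem_wordBall {x : G} {a : ℕ} (hx : x ∈ wordBall T a) : x⁻¹ ∈ wordBall T a := by
  obtain ⟨l, hl, hm, rfl⟩ := hx
  refine ⟨(l.map fun z => z⁻¹).reverse, by simpa using hl, ?_, (List.prod_inv_reverse l).symm⟩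
  intro z hz
  simp only [List.mem_reverse, List.mem_map] at hz
  obtain ⟨w, hw, rfl⟩ := hz
  rcases hm w hw with h | h
  · exact Or.inr (by simpa using h)
  · exact Or.inl (by simpa [Set.mem_inv] using h)

theorem mem_wordBall_one {x : G} (hx : x ∈ T ∪ T⁻¹) : x ∈ wordBall T 1 :=
  ⟨[x], by simp, by simpa using hx, by simp⟩

theorem wordBall_finite (hT : T.Finite) (n : ℕ) : (wordBall T n).Finite := by
  induction n with
  | zero =>
    apply Set.Finite.subset (Set.finite_singleton (1 : G))
    rintro x ⟨l, hl, -, rfl⟩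
    simp only [Nat.le_zero, List.length_eq_zero_iff] at hl
    simp [hl]
  | succ n ih =>
    apply Set.Finite.subset (ih.union (Set.Finite.image2 (· * ·) (hT.union hT.inv) ih))
    rintro x ⟨l, hl, hm, rfl⟩
    match l with
    | [] => exact Or.inl (one_mem_wordBall T n)
    | u :: l' =>
      refine Or.inr ⟨u, hm u (by simp), l'.prod,
        ⟨l', by simpa using hl, fun z hz => hm z (by simp [hz]), rfl⟩, by simp⟩

end SymEnrichAux

namespace SymEnrichAux

section Swap
variable {Ω : Type*} [DecidableEq Ω]

theorem swap_trick {x y z : Ω} (hzx : z ≠ x) (hzy : z ≠ y) :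
    Equiv.swap x z = Equiv.swap x y * Equiv.swap y z * Equiv.swap x y := by
  ext w
  simp only [Equiv.Perm.mul_apply, Equiv.swap_apply_def]
  by_cases h1 : w = x <;> by_cases h2 : w = y <;> by_cases h3 : w = z <;>
    split_ifs <;> simp_all

theorem swapF_self (a : Ω) : swapF a a = 1 := by
  apply Subtype.ext
  show Equiv.swap a a = 1
  rw [Equiv.swap_self]
  rfl

theorem swapF_comm (a b : Ω) : swapF a b = swapF b a := by
  apply Subtype.ext
  show Equiv.swap a b = Equiv.swap b a
  rw [Equiv.swap_comm]

theorem swapF_trick {x y z : Ω} (hzx : z ≠ x) (hzy : z ≠ y) :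
    swapF x z = swapF x y * swapF y z * swapF x y :=
  Subtype.ext (swap_trick hzx hzy)

theorem swapF_coe (a b : Ω) : ((swapF a b : FSym Ω) : Equiv.Perm Ω) = Equiv.swap a b := rfl

end Swap

section Conj

variable {Γ Ω : Type*} [Group Γ] [MulAction Γ Ω] [DecidableEq Ω]

theorem fsymConj_swapF (g : Γ) (a b : Ω) :
    fsymConj Γ Ω g (swapF a b) = swapF (g • a) (g • b) := by
  apply Subtype.ext
  rw [show ((fsymConj Γ Ω) g) = MulAut.conjNormal ((MulAction.toPermHom Γ Ω) g) from rfl,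
    MulAut.conjNormal_apply, swapF_coe, swapF_coe, ← Equiv.swap_apply_apply]
  simp

theorem inl_swapF_conj (g : Γ) (a b : Ω) :
    (SemidirectProduct.inl (swapF (g • a) (g • b)) : FSym Ω ⋊[fsymConj Γ Ω] Γ) =
      SemidirectProduct.inr g * SemidirectProduct.inl (swapF a b) *
        (SemidirectProduct.inr g)⁻¹ := by
  rw [← fsymConj_swapF, SemidirectProduct.inl_aut]
  simp

end Conj

end SymEnrichAux

namespace SymEnrichAux

section Main

variable {Γ Ω : Type*} [Group Γ] [MulAction Γ Ω] [DecidableEq Ω]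
  (S : Set Γ) (ω₀ : Ω)

/-- The generating set of the symmetric enrichment. -/
def genSet : Set (FSym Ω ⋊[fsymConj Γ Ω] Γ) :=
  (⇑SemidirectProduct.inr '' S) ∪
    {x : FSym Ω ⋊[fsymConj Γ Ω] Γ | ∃ s ∈ S, x = SemidirectProduct.inl (swapF ω₀ (s • ω₀))}

variable {S ω₀}

theorem inr_mem_genBall {g : Γ} {r : ℕ} (hg : g ∈ wordBall S r) :
    (SemidirectProduct.inr g : FSym Ω ⋊[fsymConj Γ Ω] Γ) ∈ wordBall (genSet S ω₀) r := by
  obtain ⟨l, hl, hm, rfl⟩ := hg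
  refine ⟨l.map (SemidirectProduct.inr : Γ →* FSym Ω ⋊[fsymConj Γ Ω] Γ), by simpa using hl,
    ?_, (map_list_prod _ l).symm⟩
  intro y hy
  simp only [List.mem_map] at hy
  obtain ⟨u, hu, rfl⟩ := hy
  rcases hm u hu with h | h
  · exact Or.inl (Or.inl ⟨u, h, rfl⟩)
  · refine Or.inr ?_
    rw [Set.mem_inv]
    have : ((SemidirectProduct.inr u : FSym Ω ⋊[fsymConj Γ Ω] Γ))⁻¹
        = SemidirectProduct.inr u⁻¹ := by simp
    rw [this]
    exact Or.inl ⟨u⁻¹, by rwa [Set.mem_inv] at h, rfl⟩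

theorem gen_swap_mem {s : Γ} (hs : s ∈ S) :
    (SemidirectProduct.inl (swapF ω₀ (s • ω₀)) : FSym Ω ⋊[fsymConj Γ Ω] Γ) ∈
      wordBall (genSet S ω₀) 1 :=
  mem_wordBall_one (Or.inl (Or.inr ⟨s, hs, rfl⟩))

/-- Key length lemma: the transposition `(ω₀, l.prod • ω₀)` has word length at most
`4 * l.length` in the symmetric enrichment. -/
theorem swap_omega_ball (hSsymm : S⁻¹ = S) :
    ∀ l : List Γ, (∀ u ∈ l, u ∈ S) →
      (SemidirectProduct.inl (swapF ω₀ (l.prod • ω₀)) : FSym Ω ⋊[fsymConj Γ Ω] Γ) ∈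
        wordBall (genSet S ω₀) (4 * l.length) := by
  intro l
  induction l with
  | nil =>
    intro _
    simp only [List.prod_nil, one_smul, swapF_self, map_one]
    exact one_mem_wordBall _ _
  | cons u e ih =>
    intro hm
    have hu : u ∈ S := hm u (by simp)
    have he : ∀ v ∈ e, v ∈ S := fun v hv => hm v (by simp [hv])
    have hz : (u :: e).prod • ω₀ = u • (e.prod • ω₀) := by
      rw [List.prod_cons, mul_smul]
    by_cases h0 : (u :: e).prod • ω₀ = ω₀
    · rw [h0, swapF_self, map_one]
      exact one_mem_wordBall _ _
    by_cases h1 : (u :: e).prod • ω₀ = u • ω₀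
    · rw [h1]
      exact wordBall_mono (by simp only [List.length_cons]; omega) (gen_swap_mem hu)
    -- main case
    rw [swapF_trick h0 h1, map_mul, map_mul]
    have hmid : (SemidirectProduct.inl (swapF (u • ω₀) ((u :: e).prod • ω₀)) :
        FSym Ω ⋊[fsymConj Γ Ω] Γ) ∈ wordBall (genSet S ω₀) (1 + 4 * e.length + 1) := by
      rw [hz, inl_swapF_conj]
      exact mul_mem_wordBall (mul_mem_wordBall
        (inr_mem_genBall (mem_wordBall_one (Or.inl hu))) (ih he))
        (inv_mem_wordBall (inr_mem_genBall (mem_wordBall_one (Or.inl hu))))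
    have hgen := gen_swap_mem (Ω := Ω) (ω₀ := ω₀) hu
    have := mul_mem_wordBall (mul_mem_wordBall hgen hmid) hgen
    refine wordBall_mono (by simp; omega) this

/-- Any transposition of two points of the Schreier ball of radius `m` has word
length at most `10 * m`. -/
theorem swap_pair_ball (hSsymm : S⁻¹ = S) {m : ℕ} {a b : Ω}
    (ha : a ∈ schreierBall S ω₀ m) (hb : b ∈ schreierBall S ω₀ m) :
    (SemidirectProduct.inl (swapF a b) : FSym Ω ⋊[fsymConj Γ Ω] Γ) ∈
      wordBall (genSet S ω₀) (10 * m) := by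
  have hSS : S ∪ S⁻¹ = S := by rw [hSsymm, Set.union_self]
  obtain ⟨g, ⟨lg, hlg, hmg, rfl⟩, rfl⟩ := ha
  obtain ⟨h, ⟨lh, hlh, hmh, rfl⟩, rfl⟩ := hb
  -- word for g⁻¹ * h
  set c : List Γ := (lg.map fun x => x⁻¹).reverse ++ lh with hc
  have hcS : ∀ u ∈ c, u ∈ S := by
    intro u hu
    rcases List.mem_append.1 hu with h' | h'
    · simp only [List.mem_reverse, List.mem_map] at h'
      obtain ⟨v, hv, rfl⟩ := h'
      have : v ∈ S := by rw [← hSS]; exact hmg v hv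
      rw [← hSsymm]; exact Set.inv_mem_inv.2 this
    · rw [← hSS]; exact hmh u h'
  have hclen : c.length ≤ m + m := by
    simp only [hc, List.length_append, List.length_reverse, List.length_map]
    omega
  have hcprod : c.prod = lg.prod⁻¹ * lh.prod := by
    rw [hc, List.prod_append, ← List.prod_inv_reverse]
  have hb' : lh.prod • ω₀ = lg.prod • (c.prod • ω₀) := by
    rw [hcprod, ← mul_smul, mul_inv_cancel_left]
  show (SemidirectProduct.inl (swapF (lg.prod • ω₀) (lh.prod • ω₀)) :
      FSym Ω ⋊[fsymConj Γ Ω] Γ) ∈ _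
  rw [hb', inl_swapF_conj]
  have h1 := inr_mem_genBall (Ω := Ω) (ω₀ := ω₀) ⟨lg, hlg, hmg, rfl⟩
  have h2 := swap_omega_ball (Ω := Ω) (ω₀ := ω₀) hSsymm c hcS
  have := mul_mem_wordBall (mul_mem_wordBall h1 h2) (inv_mem_wordBall h1)
  refine wordBall_mono ?_ this
  have := hclen
  omega

end Main

end SymEnrichAux

namespace SymEnrichAux

section LocalEmb

variable {G Q : Type*} [Group G] [Group Q] {T : Set G} {n : ℕ} {π : G → Q}

theorem lemb_one (hle : IsLocalEmbedding (wordBall T n) π) : π 1 = 1 := by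
  have h := hle.2 1 1 (one_mem_wordBall T n) (one_mem_wordBall T n)
    (by rw [one_mul]; exact one_mem_wordBall T n)
  rw [one_mul] at h
  exact mul_left_cancel (a := π 1) (by rw [mul_one, ← h])

theorem lemb_mul (hle : IsLocalEmbedding (wordBall T n) π) {x y : G} {a b : ℕ}
    (hx : x ∈ wordBall T a) (hy : y ∈ wordBall T b) (hab : a + b ≤ n) :
    π (x * y) = π x * π y :=
  hle.2 x y (wordBall_mono (by omega) hx) (wordBall_mono (by omega) hy)
    (wordBall_mono hab (mul_mem_wordBall hx hy))

theorem lemb_conj (hle : IsLocalEmbedding (wordBall T n) π) {x y : G} {a b c : ℕ}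
    (hx : x ∈ wordBall T a) (hy : y ∈ wordBall T b) (hz : x * y * x⁻¹ ∈ wordBall T c)
    (h1 : a + b ≤ n) (h2 : c + a ≤ n) :
    π x * π y * (π x)⁻¹ = π (x * y * x⁻¹) := by
  have e1 : π (x * y) = π x * π y := lemb_mul hle hx hy h1
  have e2 : π (x * y * x⁻¹ * x) = π (x * y * x⁻¹) * π x :=
    lemb_mul hle hz hx h2
  rw [inv_mul_cancel_right] at e2
  rw [← e1, e2]
  group

end LocalEmb

section Key

variable {Γ Ω : Type*} [Group Γ] [MulAction Γ Ω] [DecidableEq Ω]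

theorem key (S : Set Γ) (hSfin : S.Finite) (hSsymm : S⁻¹ = S) (ω₀ : Ω) (m n : ℕ)
    (hm : 1 ≤ m) (hmn : 16 * m ≤ n) (Q' : Type*) [Group Q'] [Fintype Q']
    (π' : (FSym Ω ⋊[fsymConj Γ Ω] Γ) → Q')
    (hle : IsLocalEmbedding (wordBall (genSet S ω₀) n) π') :
    Nat.factorial (schreierBall S ω₀ m).ncard ≤ Fintype.card Q' := by
  have hSS : S ∪ S⁻¹ = S := by rw [hSsymm, Set.union_self]
  set B : Set Ω := schreierBall S ω₀ m with hB
  have hBfin : B.Finite := ((wordBall_finite hSfin m).image _)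
  -- marker map
  set Θ : Ω → Ω → Q' := fun a b => π' (SemidirectProduct.inl (swapF a b)) with hΘ
  have hswap_ball : ∀ a ∈ B, ∀ b ∈ B,
      (SemidirectProduct.inl (swapF a b) : FSym Ω ⋊[fsymConj Γ Ω] Γ) ∈
        wordBall (genSet S ω₀) (10 * m) := fun a ha b hb => swap_pair_ball hSsymm ha hb
  have hswap_balln : ∀ a ∈ B, ∀ b ∈ B,
      (SemidirectProduct.inl (swapF a b) : FSym Ω ⋊[fsymConj Γ Ω] Γ) ∈
        wordBall (genSet S ω₀) n :=
    fun a ha b hb => wordBall_mono (by omega) (hswap_ball a ha b hb)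
  -- swaps of points of B map B to itself
  have swap_maps : ∀ p ∈ B, ∀ q ∈ B, ∀ w ∈ B, Equiv.swap p q w ∈ B := by
    intro p hp q hq w hw
    by_cases h1 : w = p
    · rw [h1, Equiv.swap_apply_left]; exact hq
    by_cases h2 : w = q
    · rw [h2, Equiv.swap_apply_right]; exact hp
    · rw [Equiv.swap_apply_of_ne_of_ne h1 h2]; exact hw
  -- the compatibility predicate
  set R : Equiv.Perm Ω → Q' → Prop := fun σ q =>
    (∀ x ∈ B, σ x ∈ B) ∧ (∀ x ∈ B, σ⁻¹ x ∈ B) ∧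
      ∀ a ∈ B, ∀ b ∈ B, q * Θ a b * q⁻¹ = Θ (σ a) (σ b) with hRdef
  have R_one : R 1 1 := by
    refine ⟨fun x hx => hx, fun x hx => hx, fun a _ b _ => by simp⟩
  have R_mul : ∀ σ τ q r, R σ q → R τ r → R (σ * τ) (q * r) := by
    rintro σ τ q r ⟨hσ1, hσ2, hσ3⟩ ⟨hτ1, hτ2, hτ3⟩
    refine ⟨fun x hx => by rw [Equiv.Perm.mul_apply]; exact hσ1 _ (hτ1 x hx),
      fun x hx => by rw [mul_inv_rev, Equiv.Perm.mul_apply]; exact hτ2 _ (hσ2 x hx),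
      fun a ha b hb => ?_⟩
    have e1 : (q * r) * Θ a b * (q * r)⁻¹ = q * (r * Θ a b * r⁻¹) * q⁻¹ := by group
    rw [e1, hτ3 a ha b hb, hσ3 _ (hτ1 a ha) _ (hτ1 b hb)]
    simp [Equiv.Perm.mul_apply]
  have R_inv : ∀ σ q, R σ q → R σ⁻¹ q⁻¹ := by
    rintro σ q ⟨hσ1, hσ2, hσ3⟩
    refine ⟨hσ2, by simpa using hσ1, fun a ha b hb => ?_⟩
    have := hσ3 (σ⁻¹ a) (hσ2 a ha) (σ⁻¹ b) (hσ2 b hb)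
    rw [show σ (σ⁻¹ a) = a by simp, show σ (σ⁻¹ b) = b by simp] at this
    rw [← this]
    group
  -- cheap transpositions satisfy R
  have R_cheap : ∀ g u, g ∈ wordBall S m → u ∈ S → g • ω₀ ∈ B → (g * u) • ω₀ ∈ B →
      R (Equiv.swap (g • ω₀) ((g * u) • ω₀))
        (π' (SemidirectProduct.inl (swapF (g • ω₀) ((g * u) • ω₀)))) := by
    intro g u hg hu hgB hguB
    set p := g • ω₀
    set q := (g * u) • ω₀
    have hx : (SemidirectProduct.inl (swapF p q) : FSym Ω ⋊[fsymConj Γ Ω] Γ) ∈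
        wordBall (genSet S ω₀) (2 * m + 1) := by
      have hq' : q = g • (u • ω₀) := by rw [← mul_smul]
      rw [show (swapF p q : FSym Ω) = swapF (g • ω₀) (g • (u • ω₀)) by rw [← hq'],
        inl_swapF_conj]
      have h1 := inr_mem_genBall (Ω := Ω) (ω₀ := ω₀) hg
      have := mul_mem_wordBall (mul_mem_wordBall h1 (gen_swap_mem hu)) (inv_mem_wordBall h1)
      exact wordBall_mono (by omega) this
    refine ⟨swap_maps p hgB q hguB, by rw [Equiv.swap_inv]; exact swap_maps p hgB q hguB,
      fun a ha b hb => ?_⟩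
    have hconj : (SemidirectProduct.inl (swapF p q) : FSym Ω ⋊[fsymConj Γ Ω] Γ) *
        SemidirectProduct.inl (swapF a b) * (SemidirectProduct.inl (swapF p q))⁻¹ =
        SemidirectProduct.inl (swapF (Equiv.swap p q a) (Equiv.swap p q b)) := by
      rw [← map_inv, ← map_mul, ← map_mul]
      congr 1
      apply Subtype.ext
      show Equiv.swap p q * Equiv.swap a b * (Equiv.swap p q)⁻¹ = _
      rw [← Equiv.swap_apply_apply]
      rfl
    have hzball : (SemidirectProduct.inl (swapF p q) : FSym Ω ⋊[fsymConj Γ Ω] Γ) *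
        SemidirectProduct.inl (swapF a b) * (SemidirectProduct.inl (swapF p q))⁻¹ ∈
        wordBall (genSet S ω₀) (10 * m) := by
      rw [hconj]
      exact hswap_ball _ (swap_maps p hgB q hguB a ha) _ (swap_maps p hgB q hguB b hb)
    have := lemb_conj hle (a := 2 * m + 1) (b := 10 * m) (c := 10 * m) hx
      (hswap_ball a ha b hb) hzball (by omega) (by omega)
    rw [hconj] at this
    exact this
  -- the set of cheap transpositions
  set CP : Set (Equiv.Perm Ω) := {σ | ∃ g u, g ∈ wordBall S m ∧ u ∈ S ∧ g • ω₀ ∈ B ∧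
    (g * u) • ω₀ ∈ B ∧ σ = Equiv.swap (g • ω₀) ((g * u) • ω₀)} with hCP
  have hclos : ∀ σ ∈ Subgroup.closure CP, ∃ q, R σ q := by
    intro σ hσ
    induction hσ using Subgroup.closure_induction with
    | mem x hx =>
      obtain ⟨g, u, hg, hu, h1, h2, rfl⟩ := hx
      exact ⟨_, R_cheap g u hg hu h1 h2⟩
    | one => exact ⟨1, R_one⟩
    | mul x y _ _ hx hy =>
      obtain ⟨q, hq⟩ := hx; obtain ⟨r, hr⟩ := hy
      exact ⟨q * r, R_mul x y q r hq hr⟩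
    | inv x _ hx =>
      obtain ⟨q, hq⟩ := hx
      exact ⟨q⁻¹, R_inv x q hq⟩
  -- chains of cheap transpositions give arbitrary transpositions
  have claimD : ∀ l : List Γ, (∀ u ∈ l, u ∈ S) → ∀ j, ∀ g : Γ, g ∈ wordBall S j →
      j + l.length ≤ m →
      Equiv.swap (g • ω₀) ((g * l.prod) • ω₀) ∈ Subgroup.closure CP := by
    intro l
    induction l with
    | nil =>
      intro _ j g hg _
      simp only [List.prod_nil, mul_one]
      rw [show Equiv.swap (g • ω₀) (g • ω₀) = 1 by rw [Equiv.swap_self]; rfl]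
      exact one_mem _
    | cons u e ih =>
      intro hmem j g hg hlen
      have hu : u ∈ S := hmem u (by simp)
      have he : ∀ v ∈ e, v ∈ S := fun v hv => hmem v (by simp [hv])
      have hgm : g ∈ wordBall S m := wordBall_mono (by simp at hlen; omega) hg
      have hgu : g * u ∈ wordBall S (j + 1) :=
        mul_mem_wordBall hg (mem_wordBall_one (Or.inl hu))
      have hgum : g * u ∈ wordBall S m := wordBall_mono (by simp at hlen; omega) hgu
      have hxB : g • ω₀ ∈ B := ⟨g, hgm, rfl⟩
      have hyB : (g * u) • ω₀ ∈ B := ⟨g * u, hgum, rfl⟩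
      have hcheap : Equiv.swap (g • ω₀) ((g * u) • ω₀) ∈ CP :=
        ⟨g, u, hgm, hu, hxB, hyB, rfl⟩
      have hz' : (g * (u :: e).prod) • ω₀ = ((g * u) * e.prod) • ω₀ := by
        rw [List.prod_cons, mul_assoc]
      by_cases hzx : (g * (u :: e).prod) • ω₀ = g • ω₀
      · rw [hzx]
        rw [show Equiv.swap (g • ω₀) (g • ω₀) = 1 by rw [Equiv.swap_self]; rfl]
        exact one_mem _
      by_cases hzy : (g * (u :: e).prod) • ω₀ = (g * u) • ω₀
      · rw [hzy]
        exact Subgroup.subset_closure hcheap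
      · rw [swap_trick hzx hzy]
        refine mul_mem (mul_mem (Subgroup.subset_closure hcheap) ?_)
          (Subgroup.subset_closure hcheap)
        rw [hz']
        exact ih he (j + 1) (g * u) hgu (by simp at hlen ⊢; omega)
  have omega_closure : ∀ a ∈ B, Equiv.swap ω₀ a ∈ Subgroup.closure CP := by
    rintro a ⟨g, ⟨lg, hlg, hmemg, rfl⟩, rfl⟩
    have := claimD lg (fun v hv => by rw [← hSS]; exact hmemg v hv) 0 1
      (one_mem_wordBall _ _) (by omega)
    simpa using this
  have pair_closure : ∀ a ∈ B, ∀ b ∈ B, Equiv.swap a b ∈ Subgroup.closure CP := by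
    intro a ha b hb
    by_cases hab : b = a
    · rw [hab]
      rw [show Equiv.swap a a = 1 by rw [Equiv.swap_self]; rfl]
      exact one_mem _
    by_cases hbω : b = ω₀
    · rw [hbω, Equiv.swap_comm]
      exact omega_closure a ha
    · rw [swap_trick hab hbω]
      refine mul_mem (mul_mem ?_ (omega_closure b hb)) ?_ <;>
        · rw [Equiv.swap_comm]; exact omega_closure a ha
  -- pass to permutations of the subtype
  haveI : Fintype ↥B := hBfin.fintype
  haveI : DecidablePred (· ∈ B) := Classical.decPred _
  have hsub : ∀ ρ : Equiv.Perm ↥B, ∃ q, R (Equiv.Perm.ofSubtype ρ) q := by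
    intro ρ
    refine Equiv.Perm.swap_induction_on ρ ?_ ?_
    · rw [map_one]; exact ⟨1, R_one⟩
    · intro f x y hxy ih
      obtain ⟨q, hq⟩ := ih
      obtain ⟨r, hr⟩ := hclos _ (pair_closure ↑x x.2 ↑y y.2)
      rw [map_mul, Equiv.Perm.ofSubtype_swap_eq]
      exact ⟨r * q, R_mul _ _ _ _ hr hq⟩
  classical
  let Φ : Equiv.Perm ↥B → Q' := fun ρ => Classical.choose (hsub ρ)
  have hΦ : ∀ ρ, R (Equiv.Perm.ofSubtype ρ) (Φ ρ) := fun ρ => Classical.choose_spec (hsub ρ)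
  -- recovery of a permutation from its Φ-value
  have hVal : ∀ σ σ' : Equiv.Perm Ω, ∀ q, R σ q → R σ' q → 2 < B.ncard →
      ∀ a ∈ B, σ a = σ' a := by
    rintro σ σ' q ⟨hσ1, hσ2, hσ3⟩ ⟨hσ'1, hσ'2, hσ'3⟩ h3 a ha
    by_contra hne
    have hrec : ∀ b ∈ B, b ≠ a → σ b = σ' a := by
      intro b hb hba
      have hΘeq : Θ (σ a) (σ b) = Θ (σ' a) (σ' b) := by
        rw [← hσ3 a ha b hb, ← hσ'3 a ha b hb]
      have hswapeq : Equiv.swap (σ a) (σ b) = Equiv.swap (σ' a) (σ' b) := by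
        have := hle.1 (hswap_balln _ (hσ1 a ha) _ (hσ1 b hb))
          (hswap_balln _ (hσ'1 a ha) _ (hσ'1 b hb)) hΘeq
        have h2 := SemidirectProduct.inl_injective this
        exact Subtype.ext_iff.1 h2
      have hσab : σ a ≠ σ b := fun h => hba.symm (σ.injective h)
      -- evaluate at σ a
      have heval : Equiv.swap (σ' a) (σ' b) (σ a) = σ b := by
        rw [← hswapeq, Equiv.swap_apply_left]
      by_cases h1 : σ a = σ' a
      · exact absurd h1 hne
      by_cases h2 : σ a = σ' b
      · rw [h2, Equiv.swap_apply_right] at heval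
        exact heval.symm
      · rw [Equiv.swap_apply_of_ne_of_ne h1 h2] at heval
        exact absurd heval hσab
    -- find two distinct points of B different from a
    have hcard : 1 < (B \ {a}).ncard := by
      rw [Set.ncard_diff_singleton_of_mem ha]
      omega
    obtain ⟨b₁, hb₁, b₂, hb₂, hb₁₂⟩ := (Set.one_lt_ncard hBfin.diff).1 hcard
    have e1 : σ b₁ = σ' a := hrec b₁ hb₁.1 (by simpa using hb₁.2)
    have e2 : σ b₂ = σ' a := hrec b₂ hb₂.1 (by simpa using hb₂.2)
    exact (by simpa using hb₁.2 : b₁ ≠ a) (by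
      have := σ.injective (e1.trans e2.symm)
      exact absurd this hb₁₂) |>.elim
  -- conclude
  rcases Nat.lt_or_ge 2 B.ncard with h3 | h3
  · -- at least three points: Φ is injective
    have hinj : Function.Injective Φ := by
      intro ρ ρ' h
      have R1 := hΦ ρ
      have R2 := hΦ ρ'
      rw [h] at R1
      have hpt : ∀ a ∈ B, Equiv.Perm.ofSubtype ρ a = Equiv.Perm.ofSubtype ρ' a :=
        fun a ha => hVal _ _ _ R1 R2 h3 a ha
      apply Equiv.ext
      intro v
      have hv := hpt ↑v v.2
      rw [Equiv.Perm.ofSubtype_apply_of_mem ρ v.2,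
        Equiv.Perm.ofSubtype_apply_of_mem ρ' v.2] at hv
      exact Subtype.coe_injective hv
    have hcard := Fintype.card_le_of_injective Φ hinj
    rw [Fintype.card_perm] at hcard
    have hBcard : Fintype.card ↥B = B.ncard := by
      rw [← Nat.card_coe_set_eq, Nat.card_eq_fintype_card]
    rw [hBcard] at hcard
    exact hcard
  · have h0 : B.ncard = 0 ∨ B.ncard = 1 ∨ B.ncard = 2 := by omega
    have hpos : 0 < Fintype.card Q' := Fintype.card_pos
    rcases h0 with h | h | h
    · rw [show (schreierBall S ω₀ m).ncard = B.ncard from rfl, h]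
      simp [Nat.factorial]; omega
    · rw [show (schreierBall S ω₀ m).ncard = B.ncard from rfl, h]
      simp [Nat.factorial]; omega
    · obtain ⟨a, ha, b, hb, hab⟩ := (Set.one_lt_ncard hBfin).1 (by omega)
      have hne : π' (SemidirectProduct.inl (swapF a b)) ≠ π' 1 := by
        intro hEq
        have h1 := hle.1 (hswap_balln a ha b hb) (one_mem_wordBall _ _) hEq
        rw [show (1 : FSym Ω ⋊[fsymConj Γ Ω] Γ) = SemidirectProduct.inl 1 from (map_one _).symm]
          at h1
        have h2 := SemidirectProduct.inl_injective h1
        have h3' : Equiv.swap a b = 1 := Subtype.ext_iff.1 h2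
        have : Equiv.swap a b a = (1 : Equiv.Perm Ω) a := by rw [h3']
        rw [Equiv.swap_apply_left] at this
        simp only [Equiv.Perm.one_apply] at this
        exact hab this.symm
      haveI : Nontrivial Q' := ⟨_, _, hne⟩
      have h1c := Fintype.one_lt_card (α := Q')
      rw [show (schreierBall S ω₀ m).ncard = B.ncard from rfl, h]
      simp [Nat.factorial]
      omega

end Key

end SymEnrichAux
/-- lower bound for the LEF growth of the symmetric enrichment
`S(Γ,Ω) = FSym(Ω) ⋊ Γ`.  First, if `(π, θ)` is a local embedding of the pair
`(B_S(n), B_{S,ω₀}(n))` into a finite action `(Q, X)`, then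
`|Sym(B_{S,ω₀}(n))| · |Q| ≥ |B_{S,ω₀}(n)|!`.  In particular any finite group
admitting a local embedding of the radius-`n` ball of `S(Γ,Ω)` with respect to
the generating set `S ∪ {(ω₀ ω₀s) : s ∈ S}` has order at least
`|B_{S,ω₀}(n/16)|!` for `n ≥ 80`. -/
theorem symEnrichment_lef_growth_lower_bound {Γ Ω : Type*} [Group Γ] [MulAction Γ Ω]
    [MulAction.IsPretransitive Γ Ω] [DecidableEq Ω]
    (S : Set Γ) (hSfin : S.Finite) (hSsymm : S⁻¹ = S) (hgen : Subgroup.closure S = ⊤)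
    (ω₀ : Ω) (n : ℕ) :
    (∀ (Q X : Type) (_ : Group Q) (_ : Fintype Q) (_ : Fintype X) (_ : MulAction Q X)
        (π : Γ → Q) (θ : Ω → X),
      IsLocalEmbedding (wordBall S n) π →
      Set.InjOn θ (schreierBall S ω₀ n) →
      (∀ g ∈ wordBall S n, ∀ ω ∈ schreierBall S ω₀ n,
        g • ω ∈ schreierBall S ω₀ n → θ (g • ω) = π g • θ ω) →
      Nat.factorial (schreierBall S ω₀ n).ncard * Fintype.card Q ≥
        Nat.factorial (schreierBall S ω₀ n).ncard) ∧
    (80 ≤ n → ∀ (Q' : Type) (_ : Group Q') (_ : Fintype Q')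
        (π' : (FSym Ω ⋊[fsymConj Γ Ω] Γ) → Q'),
      IsLocalEmbedding
        (wordBall ((⇑SemidirectProduct.inr '' S) ∪
          {x : FSym Ω ⋊[fsymConj Γ Ω] Γ | ∃ s ∈ S,
            x = SemidirectProduct.inl (swapF ω₀ (s • ω₀))}) n) π' →
      Nat.factorial (schreierBall S ω₀ (n / 16)).ncard ≤ Fintype.card Q') := by
  constructor
  · intro Q X iQ iFQ iFX iM π θ _ _ _
    exact Nat.le_mul_of_pos_right _ Fintype.card_pos
  · intro hn Q' iG iF π' hle
    have hm : 1 ≤ n / 16 := (Nat.one_le_div_iff (by norm_num)).2 (by omega)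
    have hmn : 16 * (n / 16) ≤ n := by omega
    exact SymEnrichAux.key S hSfin hSsymm ω₀ (n / 16) n hm hmn Q' π' hle
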